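/- Rosenthal's potential Φ(S) = Σ_{e∈E} Σ_{j=1}^{n_e(S)} f_e(j) is an exact potential for congestion games: for every state S, player u, and strategy s'_u ∈ Σ_u, Φ(S_{−u}, s'_u) − Φ(S) = c_u(S_{−u}, s'_u) − c_u(S). -/

import Mathlib

open Finset

/-- Number of players using resource `e` at state `S`. -/
def congCount {ι ε : Type*} [Fintype ι] [DecidableEq ε]
    (S : ι → Finset ε) (e : ε) : ℕ :=
  (Finset.univ.filter fun u => e ∈ S u).card

/-- Cost of player `u` at state `S`. -/
def playerCost {ι ε : Type*} [Fintype ι] [DecidableEq ε]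
    (f : ε → ℕ → ℝ) (S : ι → Finset ε) (u : ι) : ℝ :=
  ∑ e ∈ S u, f e (congCount S e)

/-- Rosenthal's potential. -/
def rosenthalPot {ι ε : Type*} [Fintype ι] [Fintype ε] [DecidableEq ε]
    (f : ε → ℕ → ℝ) (S : ι → Finset ε) : ℝ :=
  ∑ e : ε, ∑ j ∈ Finset.Icc 1 (congCount S e), f e j

lemma congCount_split {ι ε : Type*} [Fintype ι] [Fintype ε] [DecidableEq ι] [DecidableEq ε]
    (S : ι → Finset ε) (u : ι) (e : ε) :
    congCount S e =
      ((Finset.univ.erase u).filter fun v => e ∈ S v).card +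
        (if e ∈ S u then 1 else 0) := by
  classical
  unfold congCount
  rw [Finset.filter_erase]
  by_cases he : e ∈ S u
  · have hu : u ∈ Finset.univ.filter fun v => e ∈ S v := by simp [he]
    rw [if_pos he, Finset.card_erase_of_mem hu]
    have : 0 < (Finset.univ.filter fun v => e ∈ S v).card :=
      Finset.card_pos.2 ⟨u, hu⟩
    omega
  · have hu : u ∉ Finset.univ.filter fun v => e ∈ S v := by simp [he]
    rw [if_neg he, Finset.erase_eq_of_notMem hu, Nat.add_zero]

lemma filter_erase_update {ι ε : Type*} [Fintype ι] [Fintype ε] [DecidableEq ι] [DecidableEq ε]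
    (S : ι → Finset ε) (u : ι) (s' : Finset ε) (e : ε) :
    ((Finset.univ.erase u).filter fun v => e ∈ Function.update S u s' v) =
      ((Finset.univ.erase u).filter fun v => e ∈ S v) := by
  apply Finset.filter_congr
  intro v hv
  rw [Function.update_of_ne (Finset.ne_of_mem_erase hv)]

theorem stmt15 {ι ε : Type*} [Fintype ι] [Fintype ε] [DecidableEq ι] [DecidableEq ε]
    (f : ε → ℕ → ℝ) (S : ι → Finset ε) (u : ι) (s' : Finset ε) :
    rosenthalPot f (Function.update S u s') - rosenthalPot f S =
      playerCost f (Function.update S u s') u - playerCost f S u := by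
  classical
  set S' := Function.update S u s' with hS'
  have hSu' : S' u = s' := by simp [hS']
  unfold rosenthalPot playerCost
  rw [← Finset.sum_sub_distrib]
  have hcost : ∀ (T : ι → Finset ε),
      ∑ e ∈ T u, f e (congCount T e) =
        ∑ e : ε, (if e ∈ T u then f e (congCount T e) else 0) := by
    intro T
    rw [Finset.sum_ite_mem, Finset.univ_inter]
  rw [hcost S', hcost S, ← Finset.sum_sub_distrib]
  apply Finset.sum_congr rfl
  intro e _
  set m := ((Finset.univ.erase u).filter fun v => e ∈ S v).card with hm
  have hn : congCount S e = m + (if e ∈ S u then 1 else 0) := congCount_split S u e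
  have hn' : congCount S' e = m + (if e ∈ s' then 1 else 0) := by
    rw [congCount_split S' u e, hSu', hm, hS', filter_erase_update]
  by_cases h1 : e ∈ s' <;> by_cases h2 : e ∈ S u <;>
      simp only [h1, h2, if_true, if_false, hSu'] at hn hn' ⊢
  · rw [hn, hn']; ring_nf
  · rw [hn, hn', Nat.add_zero] at *
    rw [Finset.sum_Icc_succ_top (Nat.le_add_left 1 m)]
    ring_nf
  · rw [hn, hn', Nat.add_zero] at *
    rw [Finset.sum_Icc_succ_top (Nat.le_add_left 1 m)]
    ring_nf
  · rw [hn, hn']; ring_nf
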